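/- Let α ≠ 0 and λ ∈ ℝ, β = κ = 0. Along any solution (x(t), y(t), z(t)) of ẋ = x(y-1), ẏ = α(1-x²), ż = x - λz with x(t) > 0 for all t, the quantity α·ln(x(t)) - α·x(t)²/2 - y(t)²/2 + y(t) is constant in t. -/

import Mathlib

/-- α ≠ 0, β = κ = 0. Along any solution of
ẋ = x(y-1), ẏ = α(1-x²), ż = x - λz with x(t) > 0 for all t, the quantity
α ln x - αx²/2 - y²/2 + y is constant. -/
theorem stmt_18 (α lam : ℝ) (hα : α ≠ 0) (x y z : ℝ → ℝ)
    (hxpos : ∀ t, 0 < x t)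
    (hx : ∀ t, HasDerivAt x (x t * (y t - 1)) t)
    (hy : ∀ t, HasDerivAt y (α * (1 - x t ^ 2)) t)
    (hz : ∀ t, HasDerivAt z (x t - lam * z t) t) :
    ∀ s t : ℝ,
      α * Real.log (x s) - α * x s ^ 2 / 2 - y s ^ 2 / 2 + y s
        = α * Real.log (x t) - α * x t ^ 2 / 2 - y t ^ 2 / 2 + y t := by
  have key : ∀ t, HasDerivAt
      (fun t => α * Real.log (x t) - α * x t ^ 2 / 2 - y t ^ 2 / 2 + y t) 0 t := by
    intro t
    have hlog : HasDerivAt (fun t => Real.log (x t))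
        ((x t * (y t - 1)) / x t) t := (hx t).log (hxpos t).ne'
    have h := ((((hlog.const_mul α).sub
        (((hx t).pow 2).const_mul α |>.div_const 2)).sub
        (((hy t).pow 2).div_const 2)).add (hy t))
    convert h using 1
    · rfl
    · rfl
    · rfl
    have hxne := (hxpos t).ne'
    field_simp
    ring
  intro s t
  have hconst : ∀ a b : ℝ,
      (fun t => α * Real.log (x t) - α * x t ^ 2 / 2 - y t ^ 2 / 2 + y t) a
        = (fun t => α * Real.log (x t) - α * x t ^ 2 / 2 - y t ^ 2 / 2 + y t) b := by
    intro a b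
    exact is_const_of_deriv_eq_zero (fun u => (key u).differentiableAt)
      (fun u => (key u).deriv) a b
  exact hconst s t
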